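/- For every real x ≥ 0 and every integer m ≥ 3, log(1 + 2/m) ≤ (2/m)·(3m+1)/(3m+4). -/

import Mathlib

lemma log_le_pade (x : ℝ) (hx : 0 ≤ x) :
    Real.log (1 + x) ≤ x * (x + 6) / (2 * (2 * x + 3)) := by
  set f : ℝ → ℝ := fun y => y * (y + 6) / (2 * (2 * y + 3)) - Real.log (1 + y) with hf
  have hd : ∀ y : ℝ, 0 ≤ y → HasDerivAt f
      (((2 * y + 6) * (2 * (2 * y + 3)) - y * (y + 6) * 4) / (2 * (2 * y + 3)) ^ 2
        - 1 / (1 + y)) y := by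
    intro y hy
    have hv : 2 * (2 * y + 3) ≠ 0 := by positivity
    have hy1 : (1 : ℝ) + y ≠ 0 := by positivity
    have H1 : HasDerivAt (fun y : ℝ => y * (y + 6)) (2 * y + 6) y := by
      have h := (hasDerivAt_id y).mul ((hasDerivAt_id y).add_const 6)
      simp only [id_eq] at h
      refine h.congr_deriv ?_
      ring
    have H2 : HasDerivAt (fun y : ℝ => 2 * (2 * y + 3)) 4 y := by
      have h := (((hasDerivAt_id y).const_mul 2).add_const 3).const_mul 2
      simp only [id_eq] at h
      refine h.congr_deriv ?_
      norm_num
    have H3 : HasDerivAt (fun y : ℝ => Real.log (1 + y)) (1 / (1 + y)) y := by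
      have h := ((hasDerivAt_id y).const_add 1).log hy1
      simp only [id_eq] at h
      convert h using 1
    exact (H1.div H2 hv).sub H3
  have mono : MonotoneOn f (Set.Ici 0) := by
    apply monotoneOn_of_deriv_nonneg (convex_Ici 0)
    · intro y hy
      exact ((hd y hy).continuousAt).continuousWithinAt
    · intro y hy
      rw [interior_Ici] at hy
      exact ((hd y (le_of_lt hy)).differentiableAt).differentiableWithinAt
    · intro y hy
      rw [interior_Ici] at hy
      have hy0 : (0 : ℝ) < y := hy
      rw [(hd y hy0.le).deriv]
      have hv : (0 : ℝ) < 2 * (2 * y + 3) := by positivity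
      have hy1 : (0 : ℝ) < 1 + y := by positivity
      rw [div_sub_div _ _ (by positivity) (by positivity), div_nonneg_iff]
      left
      constructor
      · nlinarith [pow_pos hy0 3]
      · positivity
  have h0 : f 0 = 0 := by simp [hf]
  have := mono (Set.self_mem_Ici) (Set.mem_Ici.mpr hx) hx
  rw [h0] at this
  simpa [hf] using this

/-- For every integer `m ≥ 3`, `log (1 + 2/m) ≤ (2/m)·(3m+1)/(3m+4)`. -/
theorem log_one_add_two_div_le (m : ℕ) (hm : 3 ≤ m) :
    Real.log (1 + 2 / (m : ℝ)) ≤ (2 / (m : ℝ)) * ((3 * (m : ℝ) + 1) / (3 * (m : ℝ) + 4)) := by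
  have hm0 : (0 : ℝ) < m := by
    have : 0 < m := by omega
    exact_mod_cast this
  have hx : (0 : ℝ) ≤ 2 / m := by positivity
  have h := log_le_pade (2 / m) hx
  refine h.trans_eq ?_
  field_simp
  ring
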